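/- Let X, Y be elements of the monoid M of block matrices [[1_k, B],[0, T]] (T diagonal) such that the diagonal idempotents E_X = XX⁻¹ and E_Y = YY⁻¹ (commuting inverses) have the same support (i.e. the sets of indices i with T_X(i,i) ≠ 0 and T_Y(i,i) ≠ 0 coincide). If there exist Z, W in the group H of units of E := the common diagonal idempotent block such that X·E = Z·W and Y·E = W·Z, then there exist Z', W' ∈ M with X = Z'·W' and Y = W'·Z'. Specifically Z' = Z·(YY⁻¹) and W' = W·(XX⁻¹) work. -/
import Mathlib


/-- Let `X = [[1, B_X],[0, T_X]]` and `Y = [[1, B_Y],[0, T_Y]]` be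
elements of the block monoid whose diagonal blocks have the same support as the
diagonal idempotent `D = diagonal d`.  If `Z, W` belong to the unit group
`H = E G E` of `E = [[1, 0],[0, D]]` and satisfy `X E = Z W` and `Y E = W Z`,
then `Z' = Z (Y Y⁻¹)` and `W' = W (X X⁻¹)` satisfy `X = Z' W'` and `Y = W' Z'`
(where `X X⁻¹ = [[1, B_X (1 - D)],[0, D]]` and `Y Y⁻¹ = [[1, B_Y (1 - D)],[0, D]]`). -/
theorem stmt18 (k m : ℕ)
    (BX BY BZ BW : Matrix (Fin k) (Fin m) ℂ)
    (d tX tY sZ sW : Fin m → ℂ)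
    (hd : ∀ i, d i = 0 ∨ d i = 1)
    (htX : ∀ i, tX i = 0 ↔ d i = 0)
    (htY : ∀ i, tY i = 0 ↔ d i = 0)
    (hBZ : BZ * Matrix.diagonal d = BZ)
    (hsZ1 : ∀ i, d i = 1 → sZ i ≠ 0) (hsZ0 : ∀ i, d i = 0 → sZ i = 0)
    (hBW : BW * Matrix.diagonal d = BW)
    (hsW1 : ∀ i, d i = 1 → sW i ≠ 0) (hsW0 : ∀ i, d i = 0 → sW i = 0)
    (hXE : (Matrix.fromBlocks 1 BX 0 (Matrix.diagonal tX) :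
        Matrix (Fin k ⊕ Fin m) (Fin k ⊕ Fin m) ℂ) *
          Matrix.fromBlocks 1 0 0 (Matrix.diagonal d) =
        Matrix.fromBlocks 1 BZ 0 (Matrix.diagonal sZ) *
          Matrix.fromBlocks 1 BW 0 (Matrix.diagonal sW))
    (hYE : (Matrix.fromBlocks 1 BY 0 (Matrix.diagonal tY) :
        Matrix (Fin k ⊕ Fin m) (Fin k ⊕ Fin m) ℂ) *
          Matrix.fromBlocks 1 0 0 (Matrix.diagonal d) =
        Matrix.fromBlocks 1 BW 0 (Matrix.diagonal sW) *
          Matrix.fromBlocks 1 BZ 0 (Matrix.diagonal sZ)) :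
    (Matrix.fromBlocks 1 BZ 0 (Matrix.diagonal sZ) *
        Matrix.fromBlocks 1 (BY * (1 - Matrix.diagonal d)) 0 (Matrix.diagonal d) :
          Matrix (Fin k ⊕ Fin m) (Fin k ⊕ Fin m) ℂ) *
      (Matrix.fromBlocks 1 BW 0 (Matrix.diagonal sW) *
        Matrix.fromBlocks 1 (BX * (1 - Matrix.diagonal d)) 0 (Matrix.diagonal d)) =
      Matrix.fromBlocks 1 BX 0 (Matrix.diagonal tX) ∧
    (Matrix.fromBlocks 1 BW 0 (Matrix.diagonal sW) *
        Matrix.fromBlocks 1 (BX * (1 - Matrix.diagonal d)) 0 (Matrix.diagonal d) :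
          Matrix (Fin k ⊕ Fin m) (Fin k ⊕ Fin m) ℂ) *
      (Matrix.fromBlocks 1 BZ 0 (Matrix.diagonal sZ) *
        Matrix.fromBlocks 1 (BY * (1 - Matrix.diagonal d)) 0 (Matrix.diagonal d)) =
      Matrix.fromBlocks 1 BY 0 (Matrix.diagonal tY) := by
  have hdiag : ∀ (f : Fin m → ℂ), (∀ i, f i * d i = f i) →
      Matrix.diagonal f * Matrix.diagonal d = (Matrix.diagonal f : Matrix (Fin m) (Fin m) ℂ) := by
    intro f hf
    rw [Matrix.diagonal_mul_diagonal]
    exact congrArg Matrix.diagonal (funext hf)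
  have hZd := hdiag sZ (fun i => by rcases hd i with h | h <;> simp [hsZ0 i, h])
  have hWd := hdiag sW (fun i => by rcases hd i with h | h <;> simp [hsW0 i, h])
  have hXd := hdiag tX (fun i => by rcases hd i with h | h <;> simp [(htX i).mpr, h])
  have hYd := hdiag tY (fun i => by rcases hd i with h | h <;> simp [(htY i).mpr, h])
  have hsub : (1 - Matrix.diagonal d : Matrix (Fin m) (Fin m) ℂ) =
      Matrix.diagonal (fun i => 1 - d i) := by
    rw [← Matrix.diagonal_one, Matrix.diagonal_sub]
  have hcW : (1 - Matrix.diagonal d) * Matrix.diagonal sW = (0 : Matrix (Fin m) (Fin m) ℂ) := by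
    rw [hsub, Matrix.diagonal_mul_diagonal]
    have : (fun i => (1 - d i) * sW i) = fun _ => (0 : ℂ) := by
      funext i; rcases hd i with h | h
      · simp [hsW0 i h]
      · simp [h]
    rw [this, Matrix.diagonal_zero]
  have hcZ : (1 - Matrix.diagonal d) * Matrix.diagonal sZ = (0 : Matrix (Fin m) (Fin m) ℂ) := by
    rw [hsub, Matrix.diagonal_mul_diagonal]
    have : (fun i => (1 - d i) * sZ i) = fun _ => (0 : ℂ) := by
      funext i; rcases hd i with h | h
      · simp [hsZ0 i h]
      · simp [h]
    rw [this, Matrix.diagonal_zero]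
  rw [Matrix.fromBlocks_multiply, Matrix.fromBlocks_multiply] at hXE hYE
  simp only [Matrix.mul_one, Matrix.one_mul, Matrix.mul_zero, Matrix.zero_mul,
    zero_add, add_zero, hXd, hYd] at hXE hYE
  have hXE12 : BX * Matrix.diagonal d = BW + BZ * Matrix.diagonal sW := by
    have := congrArg Matrix.toBlocks₁₂ hXE; simpa using this
  have hXE22 : (Matrix.diagonal tX : Matrix (Fin m) (Fin m) ℂ) =
      Matrix.diagonal sZ * Matrix.diagonal sW := by
    have := congrArg Matrix.toBlocks₂₂ hXE; simpa using this
  have hYE12 : BY * Matrix.diagonal d = BZ + BW * Matrix.diagonal sZ := by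
    have := congrArg Matrix.toBlocks₁₂ hYE; simpa using this
  have hYE22 : (Matrix.diagonal tY : Matrix (Fin m) (Fin m) ℂ) =
      Matrix.diagonal sW * Matrix.diagonal sZ := by
    have := congrArg Matrix.toBlocks₂₂ hYE; simpa using this
  have key1 : BX * (1 - Matrix.diagonal d) + BW +
      (BY * (1 - Matrix.diagonal d) + BZ) * Matrix.diagonal sW = BX := by
    rw [Matrix.add_mul, Matrix.mul_assoc BY, hcW, Matrix.mul_zero, zero_add, add_assoc,
      ← hXE12, Matrix.mul_sub, Matrix.mul_one]
    abel
  have key2 : BY * (1 - Matrix.diagonal d) + BZ +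
      (BX * (1 - Matrix.diagonal d) + BW) * Matrix.diagonal sZ = BY := by
    rw [Matrix.add_mul, Matrix.mul_assoc BX, hcZ, Matrix.mul_zero, zero_add, add_assoc,
      ← hYE12, Matrix.mul_sub, Matrix.mul_one]
    abel
  constructor
  · rw [Matrix.fromBlocks_multiply, Matrix.fromBlocks_multiply, Matrix.fromBlocks_multiply]
    simp only [Matrix.mul_one, Matrix.one_mul, Matrix.mul_zero, Matrix.zero_mul,
      zero_add, add_zero, one_mul, mul_one, hBZ, hBW, hZd, hWd]
    rw [Matrix.fromBlocks_inj]
    exact ⟨rfl, key1, rfl, hXE22.symm⟩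
  · rw [Matrix.fromBlocks_multiply, Matrix.fromBlocks_multiply, Matrix.fromBlocks_multiply]
    simp only [Matrix.mul_one, Matrix.one_mul, Matrix.mul_zero, Matrix.zero_mul,
      zero_add, add_zero, one_mul, mul_one, hBZ, hBW, hZd, hWd]
    rw [Matrix.fromBlocks_inj]
    exact ⟨rfl, key2, rfl, hYE22.symm⟩
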